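/- For every a ∈ ℕ₀ and t ≥ 0, the marginal of the joint probability mass function q over the second coordinate is Poisson: Σ_{n=0}^{∞} q(a, n, t) = e^{−ν̄ t} (ν̄ t)^a / a!, where ν̄ = Σ_{j=1}^{K₁} ν_j. In words: the number of packets of jumps registered from a fixed merging component of a merged GCP by time t is Poisson distributed with parameter ν̄ t. -/

import Mathlib

open Finset

/-- The index set `Θ(a, n)` of pairs `(r, s)` with `∑_j r_j = a` and
`∑_j j·r_j + ∑_l l·s_l = n` (`j : Fin K1` represents jump size `j + 1`, and
`l : Fin K2` represents jump size `l + 1`). -/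
def jointTheta (K1 K2 a n : ℕ) : Finset ((Fin K1 → ℕ) × (Fin K2 → ℕ)) :=
  ((Fintype.piFinset fun _ : Fin K1 => Finset.range (a + 1)) ×ˢ
      (Fintype.piFinset fun _ : Fin K2 => Finset.range (n + 1))).filter
    fun p => (∑ j : Fin K1, p.1 j = a) ∧
      (∑ j : Fin K1, (j.1 + 1) * p.1 j) + (∑ l : Fin K2, (l.1 + 1) * p.2 l) = n

/-- The joint probability mass function of the number of packets of jumps from a
tracked merging component (with rates `nu`) and the state of the merged GCP
(the other components contributing aggregated rates `rho`). -/
noncomputable def jointPMF (K1 K2 : ℕ) (nu : Fin K1 → ℝ) (rho : Fin K2 → ℝ)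
    (a n : ℕ) (t : ℝ) : ℝ :=
  ∑ p ∈ jointTheta K1 K2 a n,
    (∏ j : Fin K1, (nu j * t) ^ (p.1 j) / (Nat.factorial (p.1 j))) *
      (∏ l : Fin K2, (rho l * t) ^ (p.2 l) / (Nat.factorial (p.2 l))) *
      Real.exp (-((∑ j : Fin K1, nu j) + ∑ l : Fin K2, rho l) * t)

/-- The exponential series. -/
lemma hasSum_exp_div (x : ℝ) : HasSum (fun n : ℕ => x ^ n / n.factorial) (Real.exp x) := by
  rw [Real.exp_eq_exp_ℝ]
  exact NormedSpace.expSeries_div_hasSum_exp x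

set_option maxHeartbeats 1000000 in
/-- Summing a product over a pi type. -/
lemma hasSum_pi_prod : ∀ (K : ℕ) (w : Fin K → ℕ → ℝ) (S : Fin K → ℝ),
    (∀ i n, 0 ≤ w i n) → (∀ i, HasSum (w i) (S i)) →
    HasSum (fun s : Fin K → ℕ => ∏ i, w i (s i)) (∏ i, S i) := by
  intro K
  induction K with
  | zero =>
    intro w S _ _
    have h1 : HasSum (fun s : Fin 0 → ℕ => ∏ i, w i (s i))
        ((fun s : Fin 0 → ℕ => ∏ i, w i (s i)) default) :=
      hasSum_single default (fun b hb => absurd (Subsingleton.elim b default) hb)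
    simpa using h1
  | succ K IH =>
    intro w S hw hS
    set G : (Fin K → ℕ) → ℝ := fun s => ∏ i : Fin K, w i.succ (s i) with hG
    have hrest : HasSum G (∏ i : Fin K, S i.succ) :=
      IH _ _ (fun i n => hw i.succ n) (fun i => hS i.succ)
    have hsummable : Summable fun p : ℕ × (Fin K → ℕ) => w 0 p.1 * G p.2 :=
      Summable.mul_of_nonneg (hS 0).summable hrest.summable (fun n => hw 0 n)
        (fun s => Finset.prod_nonneg fun i _ => hw i.succ (s i))
    have h1 : HasSum (fun p : ℕ × (Fin K → ℕ) => w 0 p.1 * G p.2)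
        (S 0 * ∏ i : Fin K, S i.succ) := (hS 0).mul hrest hsummable
    have heq : ∀ p : ℕ × (Fin K → ℕ),
        ((fun s : Fin (K + 1) → ℕ => ∏ i, w i (s i)) ∘ (Fin.consEquiv fun _ => ℕ)) p
          = w 0 p.1 * G p.2 := by
      intro p
      simp [hG, Fin.consEquiv, Fin.prod_univ_succ]
    rw [Fin.prod_univ_succ]
    exact (Equiv.hasSum_iff (Fin.consEquiv fun _ => ℕ)).mp (h1.congr_fun heq)

/-- Multinomial theorem in exponential form. -/
lemma sum_piAntidiag_prod_pow_div (K a : ℕ) (x : Fin K → ℝ) :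
    ∑ r ∈ Finset.piAntidiag Finset.univ a, ∏ j, x j ^ r j / ((r j).factorial : ℝ)
      = (∑ j, x j) ^ a / (a.factorial : ℝ) := by
  rw [Finset.sum_pow_eq_sum_piAntidiag, Finset.sum_div]
  refine Finset.sum_congr rfl fun k hk => ?_
  rw [Finset.mem_piAntidiag] at hk
  have hspec := Nat.multinomial_spec Finset.univ k
  rw [hk.1] at hspec
  have hcast : ((a.factorial : ℝ)) =
      (∏ j, ((k j).factorial : ℝ)) * (Nat.multinomial Finset.univ k : ℝ) := by
    rw [← hspec]; push_cast; ring
  rw [Finset.prod_div_distrib, hcast]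
  have h1 : (∏ j, ((k j).factorial : ℝ)) ≠ 0 :=
    Finset.prod_ne_zero_iff.mpr fun j _ => Nat.cast_ne_zero.mpr (Nat.factorial_ne_zero _)
  have h2 : (Nat.multinomial Finset.univ k : ℝ) ≠ 0 :=
    Nat.cast_ne_zero.mpr (Nat.multinomial_pos _ _).ne'
  field_simp

/-- The number of packets of jumps registered from a fixed merging component of a
merged GCP by time `t` is Poisson distributed with parameter `ν̄ t`, where
`ν̄ = Σ_j ν_j`: the marginal of `q(a, ·, t)` sums to `e^{−ν̄ t} (ν̄ t)^a / a!`. -/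
theorem jointPMF_marginal_poisson (K1 K2 : ℕ) (hK1 : 1 ≤ K1) (hK2 : 1 ≤ K2)
    (nu : Fin K1 → ℝ) (rho : Fin K2 → ℝ)
    (hnu : ∀ j, 0 ≤ nu j) (hrho : ∀ l, 0 ≤ rho l) (a : ℕ) (t : ℝ) (ht : 0 ≤ t) :
    HasSum (fun n : ℕ => jointPMF K1 K2 nu rho a n t)
      (Real.exp (-(∑ j : Fin K1, nu j) * t) * ((∑ j : Fin K1, nu j) * t) ^ a /
        (Nat.factorial a)) := by
  classical
  set ν : ℝ := ∑ j : Fin K1, nu j with hν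
  set ρ : ℝ := ∑ l : Fin K2, rho l with hρ
  set C : ℝ := Real.exp (-(ν + ρ) * t) with hC
  set g : (Fin K1 → ℕ) → ℝ := fun r =>
    if ∑ j, r j = a then ∏ j, (nu j * t) ^ (r j) / ((r j).factorial : ℝ) else 0 with hgdef
  set h : (Fin K2 → ℕ) → ℝ := fun s =>
    (∏ l, (rho l * t) ^ (s l) / ((s l).factorial : ℝ)) * C with hhdef
  have hg0 : ∀ r, 0 ≤ g r := by
    intro r
    simp only [hgdef]
    split
    · exact Finset.prod_nonneg fun j _ => div_nonneg (pow_nonneg (mul_nonneg (hnu j) ht) _)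
        (Nat.cast_nonneg _)
    · exact le_refl 0
  have hh0 : ∀ s, 0 ≤ h s := by
    intro s
    exact mul_nonneg (Finset.prod_nonneg fun l _ => div_nonneg
      (pow_nonneg (mul_nonneg (hrho l) ht) _) (Nat.cast_nonneg _)) (Real.exp_pos _).le
  -- the sum of g
  have hg : HasSum g ((ν * t) ^ a / (a.factorial : ℝ)) := by
    have hsupp : ∀ r ∉ Finset.piAntidiag (Finset.univ : Finset (Fin K1)) a, g r = 0 := by
      intro r hr
      simp only [hgdef]
      rw [if_neg]
      intro hsum
      exact hr (Finset.mem_piAntidiag.mpr ⟨hsum, fun i _ => Finset.mem_univ i⟩)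
    have h1 : HasSum g (∑ r ∈ Finset.piAntidiag (Finset.univ : Finset (Fin K1)) a, g r) :=
      hasSum_sum_of_ne_finset_zero hsupp
    have h2 : (∑ r ∈ Finset.piAntidiag (Finset.univ : Finset (Fin K1)) a, g r)
        = (ν * t) ^ a / (a.factorial : ℝ) := by
      have h3 : ∀ r ∈ Finset.piAntidiag (Finset.univ : Finset (Fin K1)) a,
          g r = ∏ j, (nu j * t) ^ (r j) / ((r j).factorial : ℝ) := by
        intro r hr
        rw [Finset.mem_piAntidiag] at hr
        simp only [hgdef]
        rw [if_pos hr.1]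
      rw [Finset.sum_congr rfl h3, sum_piAntidiag_prod_pow_div]
      rw [hν, ← Finset.sum_mul]
    rwa [h2] at h1
  -- the sum of h
  have hh : HasSum h (Real.exp (ρ * t) * C) := by
    have h1 : HasSum (fun s : Fin K2 → ℕ => ∏ l, (rho l * t) ^ (s l) / ((s l).factorial : ℝ))
        (∏ l, Real.exp (rho l * t)) :=
      hasSum_pi_prod K2 (fun l m => (rho l * t) ^ m / (m.factorial : ℝ))
        (fun l => Real.exp (rho l * t))
        (fun l m => div_nonneg (pow_nonneg (mul_nonneg (hrho l) ht) _) (Nat.cast_nonneg _))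
        (fun l => hasSum_exp_div (rho l * t))
    have h2 : (∏ l, Real.exp (rho l * t)) = Real.exp (ρ * t) := by
      rw [hρ, Finset.sum_mul, Real.exp_sum]
    exact h2 ▸ h1.mul_right C
  -- the product sum
  have hF : HasSum (fun p : (Fin K1 → ℕ) × (Fin K2 → ℕ) => g p.1 * h p.2)
      ((ν * t) ^ a / (a.factorial : ℝ) * (Real.exp (ρ * t) * C)) :=
    hg.mul hh (Summable.mul_of_nonneg hg.summable hh.summable hg0 hh0)
  -- fiberwise
  set N : (Fin K1 → ℕ) × (Fin K2 → ℕ) → ℕ := fun p =>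
    (∑ j : Fin K1, (j.1 + 1) * p.1 j) + ∑ l : Fin K2, (l.1 + 1) * p.2 l with hNdef
  have hfib := hF.tsum_fiberwise N
  have key : ∀ n : ℕ, (∑' p : N ⁻¹' {n}, g (p : (Fin K1 → ℕ) × (Fin K2 → ℕ)).1
      * h (p : (Fin K1 → ℕ) × (Fin K2 → ℕ)).2) = jointPMF K1 K2 nu rho a n t := by
    intro n
    rw [_root_.tsum_subtype (N ⁻¹' {n}) (fun p => g p.1 * h p.2)]
    rw [tsum_eq_sum (s := jointTheta K1 K2 a n) ?h0]
    case h0 =>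
      intro p hp
      by_cases hpn : p ∈ N ⁻¹' {n}
      · rw [Set.indicator_of_mem hpn]
        by_cases hpa : ∑ j, p.1 j = a
        · exfalso
          apply hp
          rw [jointTheta, Finset.mem_filter]
          constructor
          · rw [Finset.mem_product]
            constructor
            · rw [Fintype.mem_piFinset]
              intro j
              rw [Finset.mem_range, Nat.lt_succ_iff, ← hpa]
              exact Finset.single_le_sum (fun i _ => Nat.zero_le _) (Finset.mem_univ j)
            · rw [Fintype.mem_piFinset]
              intro l
              rw [Finset.mem_range, Nat.lt_succ_iff]
              have hmem : p ∈ N ⁻¹' {n} := hpn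
              have hn : (∑ j : Fin K1, (j.1 + 1) * p.1 j) + ∑ l : Fin K2, (l.1 + 1) * p.2 l
                  = n := hmem
              calc p.2 l ≤ (l.1 + 1) * p.2 l := Nat.le_mul_of_pos_left _ (Nat.succ_pos _)
                _ ≤ ∑ l : Fin K2, (l.1 + 1) * p.2 l :=
                    Finset.single_le_sum (f := fun i : Fin K2 => (i.1 + 1) * p.2 i)
                      (fun i _ => Nat.zero_le _) (Finset.mem_univ l)
                _ ≤ n := hn ▸ Nat.le_add_left _ _
          · exact ⟨hpa, hpn⟩
        · simp only [hgdef]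
          rw [if_neg hpa, zero_mul]
      · rw [Set.indicator_of_notMem hpn]
    · rw [jointPMF]
      refine Finset.sum_congr rfl fun p hp => ?_
      rw [jointTheta, Finset.mem_filter] at hp
      have hpa : ∑ j, p.1 j = a := hp.2.1
      have hpn : p ∈ N ⁻¹' {n} := hp.2.2
      rw [Set.indicator_of_mem hpn]
      simp only [hgdef, hhdef]
      rw [if_pos hpa, hC, hν, hρ, mul_assoc]
  have hval : (ν * t) ^ a / (a.factorial : ℝ) * (Real.exp (ρ * t) * C)
      = Real.exp (-ν * t) * (ν * t) ^ a / (a.factorial : ℝ) := by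
    rw [hC, ← Real.exp_add, show ρ * t + -(ν + ρ) * t = -ν * t by ring]
    ring
  rw [← hval]
  exact hfib.congr_fun fun n => (key n).symm
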